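/- arXiv:1112.3589 — 2 statements merged into one kernel-verified Lean document; each statement's English description precedes it below -/
import Mathlib

section
/- Let λ>0 and let (x,y,z)∈ℝ³ with z>0 and M(x,y)=max(|x|,|y|)≠0. Then T_λ(x,y,z) is a finite point (u,v,w)∈ℝ³ with w>0, and max(|u|,|v|)/w < max(|x|,|y|)/z. (In other words, the quantity ρ(x,y,z)=M(x,y)/z strictly decreases under T_λ on the upper half-space off the z-axis.) -/
noncomputable section

open Real Filter Topology Set MeasureTheory
open scoped Classical OnePoint

abbrev R3 := EuclideanSpace ℝ (Fin 3)

/-- The point (x,y,z) ∈ ℝ³. -/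
def mk3 (x y z : ℝ) : R3 := (EuclideanSpace.equiv (Fin 3) ℝ).symm ![x, y, z]

/-- M(x,y) = max(|x|,|y|). -/
def Mxy (x y : ℝ) : ℝ := max |x| |y|

/-- The map T₀ on the beam X = [−π/4,π/4]² × ℝ. -/
def T0 (x y z : ℝ) : R3 :=
  if x = 0 ∧ y = 0 then mk3 0 0 (Real.tanh z)
  else
    mk3 (x * Real.cos (Mxy x y) * Real.sin (Mxy x y) /
          (Real.sqrt (x ^ 2 + y ^ 2) * (Real.cos (Mxy x y) ^ 2 + Real.sinh z ^ 2)))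
        (y * Real.cos (Mxy x y) * Real.sin (Mxy x y) /
          (Real.sqrt (x ^ 2 + y ^ 2) * (Real.cos (Mxy x y) ^ 2 + Real.sinh z ^ 2)))
        (Real.sinh z * Real.cosh z / (Real.cos (Mxy x y) ^ 2 + Real.sinh z ^ 2))

/-- j(t) = ⌊(t+π/4)/(π/2)⌋. -/
def jfold (t : ℝ) : ℤ := ⌊(t + Real.pi / 4) / (Real.pi / 2)⌋

/-- t̂ = (−1)^{j(t)}·(t − j(t)·π/2), the folding of ℝ onto [−π/4,π/4] by reflections. -/
def fold (t : ℝ) : ℝ := (-1 : ℝ) ^ jfold t * (t - jfold t * (Real.pi / 2))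

/-- The generalized tangent map T : ℝ³ → ℝ³ ∪ {∞} (one-point compactification). -/
def Tmap (v : R3) : OnePoint R3 :=
  let w := T0 (fold (v 0)) (fold (v 1)) (v 2)
  if Even (jfold (v 0) + jfold (v 1)) then (w : OnePoint R3)
  else if w = 0 then ∞ else (((‖w‖ ^ 2)⁻¹ • w : R3) : OnePoint R3)

/-- T_λ = λ·T, with λ·∞ = ∞. -/
def Tl (l : ℝ) (v : R3) : OnePoint R3 := Option.map (fun w => l • w) (Tmap v)

/-- The extension of T_λ to ℝ³ ∪ {∞} sending ∞ ↦ ∞, so that iterates are defined;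
`(TlHat l)^[k] ↑x ≠ ∞` says the orbit of x has not hit ∞ within the first k steps. -/
def TlHat (l : ℝ) (p : OnePoint R3) : OnePoint R3 := Option.bind p (Tl l)

lemma fold_abs_le_pi4 (t : ℝ) : |fold t| ≤ Real.pi / 4 := by
  have hpi := Real.pi_pos
  have h1 : ((jfold t : ℝ)) ≤ (t + Real.pi / 4) / (Real.pi / 2) := Int.floor_le _
  have h2 : (t + Real.pi / 4) / (Real.pi / 2) < (jfold t : ℝ) + 1 := Int.lt_floor_add_one _
  have hd : (0:ℝ) < Real.pi / 2 := by linarith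
  have h1' : ((jfold t : ℝ)) * (Real.pi/2) ≤ t + Real.pi / 4 := (le_div_iff₀ hd).mp h1
  have h2' : t + Real.pi / 4 < ((jfold t : ℝ) + 1) * (Real.pi/2) := (div_lt_iff₀ hd).mp h2
  rw [fold, abs_mul]
  have : |(-1 : ℝ) ^ jfold t| = 1 := by
    rcases Int.even_or_odd (jfold t) with he | ho
    · rw [he.neg_zpow, one_zpow, abs_one]
    · rw [ho.neg_one_zpow, abs_neg, abs_one]
  rw [this, one_mul, abs_le]
  constructor <;> nlinarith

lemma fold_abs_le (t : ℝ) : |fold t| ≤ |t| := by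
  have hpi := Real.pi_pos
  rcases eq_or_ne (jfold t) 0 with h | h
  · simp [fold, h]
  · refine (fold_abs_le_pi4 t).trans ?_
    have h1 : ((jfold t : ℝ)) ≤ (t + Real.pi / 4) / (Real.pi / 2) := Int.floor_le _
    have h2 : (t + Real.pi / 4) / (Real.pi / 2) < (jfold t : ℝ) + 1 := Int.lt_floor_add_one _
    have hd : (0:ℝ) < Real.pi / 2 := by linarith
    have h1' : ((jfold t : ℝ)) * (Real.pi/2) ≤ t + Real.pi / 4 := (le_div_iff₀ hd).mp h1
    have h2' : t + Real.pi / 4 < ((jfold t : ℝ) + 1) * (Real.pi/2) := (div_lt_iff₀ hd).mp h2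
    rcases lt_or_gt_of_ne h with hj | hj
    · have hj' : jfold t ≤ -1 := by omega
      have : (jfold t : ℝ) ≤ -1 := by exact_mod_cast hj'
      have ht : t < -(Real.pi/4) := by nlinarith
      rw [abs_of_neg (by linarith)]; linarith
    · have : (1:ℝ) ≤ (jfold t : ℝ) := by exact_mod_cast hj
      have ht : Real.pi/4 ≤ t := by nlinarith
      rw [abs_of_nonneg (by linarith)]; linarith

lemma core (a b z M0 : ℝ) (hz : 0 < z) (ha : |a| ≤ Real.pi/4) (hb : |b| ≤ Real.pi/4)
    (hle : max |a| |b| ≤ M0) (hM0 : 0 < M0) :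
    0 < (T0 a b z) 2 ∧ max |(T0 a b z) 0| |(T0 a b z) 1| / (T0 a b z) 2 < M0 / z := by
  have hpi := Real.pi_gt_three
  have hsh : 0 < Real.sinh z := Real.sinh_pos_iff.mpr hz
  have hch : (1:ℝ) ≤ Real.cosh z := Real.one_le_cosh z
  rw [T0]
  split_ifs with h
  · have ht : 0 < Real.tanh z := by
      rw [Real.tanh_eq_sinh_div_cosh]; exact div_pos hsh (by linarith)
    have e0 : (mk3 0 0 (Real.tanh z)) 0 = 0 := rfl
    have e1 : (mk3 0 0 (Real.tanh z)) 1 = 0 := rfl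
    have e2 : (mk3 0 0 (Real.tanh z)) 2 = Real.tanh z := rfl
    rw [e0, e1, e2]
    simp only [abs_zero, max_self, zero_div]
    exact ⟨ht, div_pos hM0 hz⟩
  · set M := Mxy a b with hMdef
    have hMmax : M = max |a| |b| := rfl
    have hMpos : 0 < M := by
      rw [hMmax]
      rcases not_and_or.mp h with h' | h'
      · exact lt_max_of_lt_left (abs_pos.mpr h')
      · exact lt_max_of_lt_right (abs_pos.mpr h')
    have hM4 : M ≤ Real.pi / 4 := by rw [hMmax]; exact max_le ha hb
    have hc : 0 < Real.cos M := Real.cos_pos_of_mem_Ioo ⟨by nlinarith, by nlinarith⟩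
    have hs : 0 < Real.sin M := Real.sin_pos_of_pos_of_lt_pi hMpos (by nlinarith)
    have hsM : Real.sin M < M := Real.sin_lt hMpos
    have hc1 : Real.cos M ≤ 1 := Real.cos_le_one M
    have hr : 0 < Real.sqrt (a ^ 2 + b ^ 2) := by
      apply Real.sqrt_pos.mpr
      rcases not_and_or.mp h with h' | h' <;> positivity
    set r := Real.sqrt (a ^ 2 + b ^ 2) with hrdef
    have hMr : M ≤ r := by
      rw [hrdef]
      apply Real.le_sqrt' hMpos |>.mpr
      rcases max_cases |a| |b| with ⟨he, _⟩ | ⟨he, _⟩ <;> rw [hMmax, he] <;>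
        [skip; skip] <;> nlinarith [sq_abs a, sq_abs b, sq_nonneg a, sq_nonneg b]
    set D := Real.cos M ^ 2 + Real.sinh z ^ 2 with hDdef
    have hD : 0 < D := by positivity
    have e0 : (T0 a b z) 0 = a * Real.cos M * Real.sin M / (r * D) := by
      rw [T0]; rw [if_neg h]; rfl
    -- we directly compute on the mk3 components
    have f0 : (mk3 (a * Real.cos M * Real.sin M / (r * D))
        (b * Real.cos M * Real.sin M / (r * D))
        (Real.sinh z * Real.cosh z / D)) 0 = a * Real.cos M * Real.sin M / (r * D) := rfl
    have f1 : (mk3 (a * Real.cos M * Real.sin M / (r * D))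
        (b * Real.cos M * Real.sin M / (r * D))
        (Real.sinh z * Real.cosh z / D)) 1 = b * Real.cos M * Real.sin M / (r * D) := rfl
    have f2 : (mk3 (a * Real.cos M * Real.sin M / (r * D))
        (b * Real.cos M * Real.sin M / (r * D))
        (Real.sinh z * Real.cosh z / D)) 2 = Real.sinh z * Real.cosh z / D := rfl
    rw [f0, f1, f2]
    have habs : ∀ u : ℝ, |u * Real.cos M * Real.sin M / (r * D)|
        = |u| * (Real.cos M * Real.sin M / (r * D)) := by
      intro u
      rw [abs_div, abs_mul, abs_mul, abs_of_pos hc, abs_of_pos hs,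
        abs_of_pos (mul_pos hr hD)]
      ring
    rw [habs, habs]
    have hK : 0 ≤ Real.cos M * Real.sin M / (r * D) := by positivity
    rw [← max_mul_of_nonneg _ _ hK, ← hMmax]
    have hw2 : 0 < Real.sinh z * Real.cosh z / D := by positivity
    refine ⟨hw2, ?_⟩
    have heq : M * (Real.cos M * Real.sin M / (r * D)) / (Real.sinh z * Real.cosh z / D)
        = M * Real.cos M * Real.sin M / (r * (Real.sinh z * Real.cosh z)) := by
      field_simp
    rw [heq, div_lt_div_iff₀ (by positivity : (0:ℝ) < r * (Real.sinh z * Real.cosh z)) hz]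
    have hzsh : z < Real.sinh z := Real.self_lt_sinh_iff.mpr hz
    have hMM0 : M ≤ M0 := hMmax ▸ hle
    have hA : Real.sin M < M0 := hsM.trans_le hMM0
    have hB : z < Real.sinh z * Real.cosh z :=
      lt_of_lt_of_le hzsh (le_mul_of_one_le_right hsh.le hch)
    have hC : Real.sin M * z < M0 * (Real.sinh z * Real.cosh z) :=
      mul_lt_mul'' hA hB hs.le hz.le
    have hD' : M * Real.cos M ≤ r := (mul_le_of_le_one_right hMpos.le hc1).trans hMr
    calc M * Real.cos M * Real.sin M * z = (M * Real.cos M) * (Real.sin M * z) := by ring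
      _ ≤ r * (Real.sin M * z) := mul_le_mul_of_nonneg_right hD' (by positivity)
      _ < r * (M0 * (Real.sinh z * Real.cosh z)) := by
          exact mul_lt_mul_of_pos_left hC hr
      _ = M0 * (r * (Real.sinh z * Real.cosh z)) := by ring

lemma scale_ratio {Q : ℝ} (c : ℝ) (hc : 0 < c) (w : R3) (h2 : 0 < w 2)
    (hr : max |w 0| |w 1| / w 2 < Q) :
    0 < (c • w) 2 ∧ max |(c • w) 0| |(c • w) 1| / (c • w) 2 < Q := by
  have e : ∀ i, (c • w) i = c * w i := fun i => rfl
  refine ⟨by rw [e]; exact mul_pos hc h2, ?_⟩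
  rw [e, e, e, abs_mul, abs_mul, abs_of_pos hc, ← mul_max_of_nonneg _ _ hc.le,
    mul_div_mul_left _ _ (ne_of_gt hc)]
  exact hr

theorem statement9' (l x y z : ℝ) (hl : 0 < l) (hz : 0 < z) (hM : max |x| |y| ≠ 0) :
    ∃ w : R3, (Option.map (fun w => l • w) (Tmap (mk3 x y z)) : OnePoint R3) = ↑w ∧ 0 < w 2 ∧
      max |w 0| |w 1| / w 2 < max |x| |y| / z := by
  have hv0 : (mk3 x y z) 0 = x := rfl
  have hv1 : (mk3 x y z) 1 = y := rfl
  have hv2 : (mk3 x y z) 2 = z := rfl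
  have hM0 : 0 < max |x| |y| :=
    lt_of_le_of_ne (le_trans (abs_nonneg x) (le_max_left _ _)) (Ne.symm hM)
  set w0 := T0 (fold x) (fold y) z with hw0def
  obtain ⟨hw2, hwr⟩ := core (fold x) (fold y) z (max |x| |y|) hz
    (fold_abs_le_pi4 x) (fold_abs_le_pi4 y)
    (max_le_max (fold_abs_le x) (fold_abs_le y)) hM0
  rw [← hw0def] at hw2 hwr
  by_cases hev : Even (jfold x + jfold y)
  · refine ⟨l • w0, ?_, (scale_ratio l hl w0 hw2 hwr).1, (scale_ratio l hl w0 hw2 hwr).2⟩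
    simp only [Tmap, hv0, hv1, hv2]
    rw [if_pos hev]
    rfl
  · have hne : w0 ≠ 0 := by
      intro h
      rw [h] at hw2
      exact lt_irrefl 0 hw2
    have hinv : 0 < (‖w0‖ ^ 2)⁻¹ := by
      have : 0 < ‖w0‖ := norm_pos_iff.mpr hne
      positivity
    obtain ⟨h2', hr'⟩ := scale_ratio ((‖w0‖ ^ 2)⁻¹) hinv w0 hw2 hwr
    refine ⟨l • ((‖w0‖ ^ 2)⁻¹ • w0), ?_,
      (scale_ratio l hl _ h2' hr').1, (scale_ratio l hl _ h2' hr').2⟩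
    simp only [Tmap, hv0, hv1, hv2]
    rw [if_neg hev, if_neg hne]
    rfl

/-- the quantity ρ(x,y,z) = max(|x|,|y|)/z strictly decreases under T_λ on
the upper half-space off the z-axis: if z > 0 and max(|x|,|y|) ≠ 0, then T_λ(x,y,z) is
a finite point (u,v,w) with w > 0 and max(|u|,|v|)/w < max(|x|,|y|)/z. -/
theorem statement9 (l x y z : ℝ) (hl : 0 < l) (hz : 0 < z) (hM : max |x| |y| ≠ 0) :
    ∃ w : R3, Tl l (mk3 x y z) = ↑w ∧ 0 < w 2 ∧
      max |w 0| |w 1| / w 2 < max |x| |y| / z := by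
  exact statement9' l x y z hl hz hM
end
end

section
/- If 0<λ≤1, then there exists ε>0 such that the set V = {(x,y,z)∈ℝ³ : max(|x|,|y|) < z/2 < ε} is contained in the basin of attraction A((0,0,0)) of the fixed point (0,0,0) of T_λ. -/
noncomputable section

open Real Filter Topology Set MeasureTheory
open scoped Classical OnePoint

/-- The basin of attraction A(x₀) of a fixed point x₀ of T_λ: points whose orbit is
defined for all time and converges to x₀. -/
def basin (l : ℝ) (x0 : R3) : Set R3 :=
  {x | (∀ k : ℕ, (TlHat l)^[k] ↑x ≠ ∞) ∧
    ∀ ε > (0 : ℝ), ∃ N : ℕ, ∀ k ≥ N, ∀ w : R3, (TlHat l)^[k] ↑x = ↑w → ‖w - x0‖ < ε}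


lemma sinh_upper {t : ℝ} (h0 : 0 ≤ t) (h1 : t ≤ 1) :
    Real.sinh t ≤ t + t^3/6 + t^5/100 := by
  have ha := Real.exp_bound (x := t) (by rw [abs_of_nonneg h0]; exact h1) (n := 5) (by norm_num)
  have hb := Real.exp_bound (x := -t) (by rw [abs_neg, abs_of_nonneg h0]; exact h1) (n := 5) (by norm_num)
  rw [abs_le] at ha hb
  simp only [Finset.sum_range_succ, Finset.sum_range_zero] at ha hb
  rw [Real.sinh_eq]
  rw [abs_of_nonneg h0] at ha
  rw [abs_neg, abs_of_nonneg h0] at hb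
  norm_num [Nat.factorial] at ha hb
  nlinarith [ha.1, ha.2, hb.1, hb.2]

lemma key_contract {M z : ℝ} (hM0 : 0 ≤ M) (hMz : 2*M < z) (hz : z ≤ 1/4) :
    Real.sinh z * Real.cosh z ≤ (z - z^3/24) * (Real.cos M ^2 + Real.sinh z ^2) := by
  have hz0 : 0 < z := by linarith
  have h2z : Real.sinh (2*z) ≤ 2*z + (2*z)^3/6 + (2*z)^5/100 :=
    sinh_upper (by linarith) (by linarith)
  rw [Real.sinh_two_mul] at h2z
  have hcos : 1 - M^2/2 ≤ Real.cos M := Real.one_sub_sq_div_two_le_cos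
  have hcos1 : Real.cos M ≤ 1 := Real.cos_le_one M
  have hcospos : (0:ℝ) < 1 - M^2/2 := by nlinarith
  have hsinh : z ≤ Real.sinh z := (Real.self_le_sinh_iff).2 hz0.le
  have hcosh : 1 ≤ Real.cosh z := Real.one_le_cosh z
  have hsq : (1 - M^2/2)^2 ≤ Real.cos M ^2 := by
    have := mul_self_le_mul_self hcospos.le hcos
    nlinarith
  have hsq2 : z^2 ≤ Real.sinh z ^2 := by nlinarith
  have hD : 1 + 3/4*z^2 ≤ Real.cos M ^2 + Real.sinh z ^2 := by nlinarith
  have hpos : (0:ℝ) ≤ z - z^3/24 := by nlinarith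
  calc Real.sinh z * Real.cosh z ≤ z + 2/3*z^3 + 4/25*z^5 := by nlinarith
    _ ≤ (z - z^3/24) * (1 + 3/4*z^2) := by
        have hz2 : z^2 ≤ 1/16 := by nlinarith
        have hz5 : z^5 ≤ z^3/16 := by
          have h := mul_le_mul_of_nonneg_left hz2 (pow_pos hz0 3).le
          calc z^5 = z^3 * z^2 := by ring
            _ ≤ z^3 * (1/16) := h
            _ = z^3/16 := by ring
        nlinarith [hz5]
    _ ≤ (z - z^3/24) * (Real.cos M ^2 + Real.sinh z ^2) := by
        exact mul_le_mul_of_nonneg_left hD hpos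

lemma mk3_apply0 (x y z : ℝ) : mk3 x y z 0 = x := rfl
lemma mk3_apply1 (x y z : ℝ) : mk3 x y z 1 = y := rfl
lemma mk3_apply2 (x y z : ℝ) : mk3 x y z 2 = z := rfl
lemma smul_mk3 (l x y z : ℝ) : l • mk3 x y z = mk3 (l*x) (l*y) (l*z) := by
  ext i
  fin_cases i <;> simp [mk3] <;> rfl
lemma mk3_zero : mk3 0 0 0 = 0 := by
  ext i; fin_cases i <;> rfl
lemma norm_mk3_le (x y z : ℝ) (hx : |x| ≤ z) (hy : |y| ≤ z) (hz : 0 ≤ z) :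
    ‖mk3 x y z‖ ≤ 2*z := by
  rw [show (2*z : ℝ) = Real.sqrt ((2*z)^2) from (Real.sqrt_sq (by linarith)).symm]
  rw [EuclideanSpace.norm_eq]
  apply Real.sqrt_le_sqrt
  have h0 : ‖(mk3 x y z) 0‖ = |x| := rfl
  have h1 : ‖(mk3 x y z) 1‖ = |y| := rfl
  have h2 : ‖(mk3 x y z) 2‖ = |z| := rfl
  rw [Fin.sum_univ_three, h0, h1, h2, abs_of_nonneg hz]
  nlinarith [abs_nonneg x, abs_nonneg y, sq_abs x, sq_abs y]

lemma jfold_zero {t : ℝ} (h : |t| < Real.pi/4) : jfold t = 0 := by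
  have hpi : 0 < Real.pi := Real.pi_pos
  rw [abs_lt] at h
  unfold jfold
  rw [Int.floor_eq_zero_iff]
  constructor
  · apply div_nonneg (by linarith) (by linarith)
  · rw [div_lt_one (by linarith)]; linarith

lemma fold_eq {t : ℝ} (h : |t| < Real.pi/4) : fold t = t := by
  unfold fold
  rw [jfold_zero h]
  simp

lemma sinh_le_sinh_mul_cosh {z : ℝ} (hz : 0 ≤ z) :
    Real.sinh z ≤ Real.sinh z * Real.cosh z := by
  nlinarith [Real.one_le_cosh z, Real.sinh_nonneg_iff.2 hz]

lemma T0_spec (x y z : ℝ) (hM : max |x| |y| < z/2) (hz : z < 1/4) :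
    ∃ a b c : ℝ, T0 x y z = mk3 a b c ∧ max |a| |b| < c/2 ∧ 0 < c ∧ c ≤ z - z^3/24 := by
  have hM0 : (0:ℝ) ≤ max |x| |y| := le_trans (abs_nonneg x) (le_max_left _ _)
  have hz0 : 0 < z := by linarith
  have hzle : z ≤ 1/4 := hz.le
  have hsinhz : z ≤ Real.sinh z := Real.self_le_sinh_iff.2 hz0.le
  have hsc : z ≤ Real.sinh z * Real.cosh z := hsinhz.trans (sinh_le_sinh_mul_cosh hz0.le)
  have hscpos : 0 < Real.sinh z * Real.cosh z := lt_of_lt_of_le hz0 hsc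
  by_cases hxy : x = 0 ∧ y = 0
  · refine ⟨0, 0, Real.tanh z, ?_, ?_, ?_, ?_⟩
    · rw [T0, if_pos hxy]
    · have : 0 < Real.tanh z := by
        rw [Real.tanh_eq_sinh_div_cosh]
        exact div_pos (Real.sinh_pos_iff.2 hz0) (Real.cosh_pos z)
      simp [this]
    · rw [Real.tanh_eq_sinh_div_cosh]
      exact div_pos (Real.sinh_pos_iff.2 hz0) (Real.cosh_pos z)
    · -- tanh z ≤ z - z^3/24
      have h := key_contract (le_refl (0:ℝ)) (by linarith : 2*(0:ℝ) < z) hzle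
      rw [Real.cos_zero] at h
      have hc := Real.cosh_pos z
      rw [Real.tanh_eq_sinh_div_cosh, div_le_iff₀ hc]
      nlinarith [Real.cosh_sq z]
  · -- main branch
    set M := Mxy x y with hMdef
    have hMeq : M = max |x| |y| := rfl
    have hMpos : 0 < M := by
      rw [hMeq]
      rcases not_and_or.1 hxy with h | h
      · exact lt_max_of_lt_left (abs_pos.2 h)
      · exact lt_max_of_lt_right (abs_pos.2 h)
    have hMz : 2*M < z := by rw [hMeq]; linarith
    have hMsmall : M < 1/8 := by nlinarith
    have hcos : 0 < Real.cos M := by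
      have := Real.one_sub_sq_div_two_le_cos (x := M)
      nlinarith
    have hsin : 0 ≤ Real.sin M := Real.sin_nonneg_of_nonneg_of_le_pi hMpos.le
      (by nlinarith [Real.pi_gt_three])
    set r := Real.sqrt (x^2 + y^2) with hrdef
    have hr : 0 < r := Real.sqrt_pos.2 (by
      rcases not_and_or.1 hxy with h | h
      · positivity
      · positivity)
    have hMr : M ≤ r := by
      rw [hMeq]
      apply max_le
      · rw [← Real.sqrt_sq_eq_abs]
        exact Real.sqrt_le_sqrt (by nlinarith [sq_nonneg y])
      · rw [← Real.sqrt_sq_eq_abs]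
        exact Real.sqrt_le_sqrt (by nlinarith [sq_nonneg x])
    set D := Real.cos M ^2 + Real.sinh z ^2 with hDdef
    have hD : 0 < D := by positivity
    refine ⟨_, _, _, (if_neg hxy : T0 x y z = _), ?_, ?_, ?_⟩
    · -- max |a| |b| < c/2
      have habs : ∀ u : ℝ, |u * Real.cos M * Real.sin M / (r * D)|
          = |u| * (Real.cos M * Real.sin M) / (r * D) := by
        intro u
        rw [abs_div, abs_of_pos (mul_pos hr hD), abs_mul, abs_mul,
          abs_of_pos hcos, abs_of_nonneg hsin, mul_assoc]
      rw [habs, habs]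
      have hq' : (0:ℝ) ≤ Real.cos M * Real.sin M := by positivity
      have h2 : 2*(Real.cos M * Real.sin M) < Real.sinh z * Real.cosh z := by
        have hs2 := Real.sin_two_mul M
        have hsle := Real.sin_le (by positivity : (0:ℝ) ≤ 2*M)
        linarith
      rw [max_div_div_right (le_of_lt (mul_pos hr hD)),
        ← max_mul_of_nonneg _ _ hq', ← hMeq, ← hMdef]
      calc M * (Real.cos M * Real.sin M) / (r*D)
          = M * ((Real.cos M * Real.sin M)/(r*D)) := by rw [mul_div_assoc]
        _ ≤ r * ((Real.cos M * Real.sin M)/(r*D)) := by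
            apply mul_le_mul_of_nonneg_right hMr (by positivity)
        _ = (Real.cos M * Real.sin M)/D := by field_simp
        _ < (Real.sinh z * Real.cosh z / D)/2 := by
            rw [div_div, div_lt_div_iff₀ hD (by positivity : (0:ℝ) < D*2)]
            nlinarith
    · exact div_pos hscpos hD
    · rw [div_le_iff₀ hD]
      exact key_contract hMpos.le hMz hzle

lemma norm_le_of (w : R3) (ha : |w 0| ≤ w 2) (hb : |w 1| ≤ w 2) (hc : 0 ≤ w 2) :
    ‖w‖ ≤ 2 * w 2 := by
  rw [show (2 * w 2 : ℝ) = Real.sqrt ((2 * w 2)^2) from (Real.sqrt_sq (by linarith)).symm]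
  rw [EuclideanSpace.norm_eq]
  apply Real.sqrt_le_sqrt
  rw [Fin.sum_univ_three]
  simp only [Real.norm_eq_abs]
  nlinarith [abs_nonneg (w 0), abs_nonneg (w 1), sq_abs (w 0), sq_abs (w 1), sq_abs (w 2),
    abs_of_nonneg hc]

def Good (v : R3) : Prop := max |v 0| |v 1| < v 2 / 2 ∧ v 2 < 1/4

lemma step (l : ℝ) (h0 : 0 < l) (h1 : l ≤ 1) (v : R3) (hv : Good v) :
    ∃ w : R3, Tl l v = ↑w ∧ Good w ∧ w 2 ≤ v 2 - l * (v 2)^3/24 ∧ 0 < w 2 := by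
  obtain ⟨hmax, hz4⟩ := hv
  have hm0 : (0:ℝ) ≤ max |v 0| |v 1| := le_trans (abs_nonneg _) (le_max_left _ _)
  have hz0 : 0 < v 2 := by linarith
  have hpi : (1/8 : ℝ) < Real.pi/4 := by nlinarith [Real.pi_gt_three]
  have hx : |v 0| < Real.pi/4 := by
    have : |v 0| ≤ max |v 0| |v 1| := le_max_left _ _
    linarith
  have hy : |v 1| < Real.pi/4 := by
    have : |v 1| ≤ max |v 0| |v 1| := le_max_right _ _
    linarith
  obtain ⟨a, b, c, hT0, hm, hc0, hcle⟩ := T0_spec (v 0) (v 1) (v 2) hmax hz4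
  have hTm : Tmap v = ((T0 (v 0) (v 1) (v 2) : R3) : OnePoint R3) := by
    unfold Tmap
    rw [jfold_zero hx, jfold_zero hy, fold_eq hx, fold_eq hy]
    norm_num
  refine ⟨mk3 (l*a) (l*b) (l*c), ?_, ?_, ?_, ?_⟩
  · rw [Tl, hTm, hT0, ← smul_mk3]
    rfl
  · constructor
    · rw [mk3_apply0, mk3_apply1, mk3_apply2, abs_mul, abs_mul, abs_of_pos h0,
        ← mul_max_of_nonneg _ _ h0.le]
      calc l * (|a| ⊔ |b|) < l * (c/2) := mul_lt_mul_of_pos_left hm h0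
        _ = l*c/2 := by ring
    · rw [mk3_apply2]
      nlinarith [mul_le_of_le_one_left hc0.le h1, pow_pos hz0 3]
  · rw [mk3_apply2]
    nlinarith [mul_le_mul_of_nonneg_left hcle h0.le,
      mul_nonneg (sub_nonneg.2 h1) hz0.le, mul_pos hz0 (mul_pos hz0 hz0)]
  · rw [mk3_apply2]; positivity


/-- for 0 < λ ≤ 1 there exists ε > 0 such that the set
V = {(x,y,z) : max(|x|,|y|) < z/2 < ε} is contained in the basin of the origin. -/
theorem statement11 (l : ℝ) (h0 : 0 < l) (h1 : l ≤ 1) :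
    ∃ ε > (0 : ℝ), {v : R3 | max |v 0| |v 1| < v 2 / 2 ∧ v 2 / 2 < ε} ⊆
      basin l (mk3 0 0 0) := by
  refine ⟨1/16, by norm_num, ?_⟩
  intro v hv
  obtain ⟨hv1, hv2⟩ := hv
  have hgood : Good v := ⟨hv1, by linarith⟩
  have main : ∀ k : ℕ, ∃ w : R3, (TlHat l)^[k] ↑v = ↑w ∧ Good w := by
    intro k
    induction k with
    | zero => exact ⟨v, rfl, hgood⟩
    | succ n ih =>
      obtain ⟨w, hw, hgw⟩ := ih
      obtain ⟨w', hw', hgw', _, _⟩ := step l h0 h1 w hgw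
      refine ⟨w', ?_, hgw'⟩
      rw [Function.iterate_succ_apply', hw]
      exact hw'
  set zk : ℕ → ℝ := fun k => Option.elim ((TlHat l)^[k] ↑v) 0 (fun w => w 2) with hzk
  have hzval : ∀ k (w : R3), (TlHat l)^[k] ↑v = ↑w → zk k = w 2 := by
    intro k w h
    rw [hzk]
    simp only [h]
    rfl
  have hdec : ∀ k, zk (k+1) ≤ zk k - l * (zk k)^3/24 ∧ 0 < zk k := by
    intro k
    obtain ⟨w, hw, hgw⟩ := main k
    obtain ⟨w', hw', hgw', hle, hpos⟩ := step l h0 h1 w hgw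
    have e1 := hzval k w hw
    have e2 : zk (k+1) = w' 2 := hzval (k+1) w'
      (by rw [Function.iterate_succ_apply', hw]; exact hw')
    have hw2 : 0 < w 2 := by
      have h' : (0:ℝ) ≤ max |w 0| |w 1| := le_trans (abs_nonneg _) (le_max_left _ _)
      have := hgw.1
      linarith
    exact ⟨by rw [e1, e2]; exact hle, by rw [e1]; exact hw2⟩
  have hmono : Antitone zk := by
    apply antitone_nat_of_succ_le
    intro k
    have h1' := (hdec k).1
    have h2' := (hdec k).2
    nlinarith [pow_pos h2' 3, h0]
  have hsmall : ∀ δ : ℝ, 0 < δ → ∃ N, zk N < δ := by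
    intro δ hδ
    by_contra hcon
    push_neg at hcon
    have hstep' : ∀ k, zk (k+1) ≤ zk k - l*δ^3/24 := by
      intro k
      have ha := (hdec k).1
      have hb := hcon k
      have hc : δ^3 ≤ (zk k)^3 := pow_le_pow_left₀ hδ.le hb 3
      nlinarith [mul_le_mul_of_nonneg_left hc h0.le]
    have hlin : ∀ k : ℕ, zk k ≤ zk 0 - k * (l*δ^3/24) := by
      intro k
      induction k with
      | zero => simp
      | succ n ih =>
        have := hstep' n
        push_cast
        push_cast at ih
        linarith
    obtain ⟨k, hk⟩ := exists_nat_gt ((zk 0)/(l*δ^3/24))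
    have hq : 0 < l*δ^3/24 := by positivity
    have hgt : zk 0 < (k:ℝ) * (l*δ^3/24) := by
      rw [div_lt_iff₀ hq] at hk
      exact hk
    have := hlin k
    have := hcon k
    linarith
  constructor
  · intro k
    obtain ⟨w, hw, _⟩ := main k
    rw [hw]
    exact OnePoint.coe_ne_infty w
  · intro ε hε
    obtain ⟨N, hN⟩ := hsmall (ε/4) (by linarith)
    refine ⟨N, ?_⟩
    intro k hk w hw
    obtain ⟨w', hw', hgw'⟩ := main k
    have hww : w = w' := by
      rw [hw] at hw'
      exact OnePoint.coe_injective hw'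
    subst hww
    have hzw := hzval k w hw
    have hzk0 : 0 < zk k := (hdec k).2
    have hzkN : zk k ≤ zk N := hmono hk
    have hmax' : (0:ℝ) ≤ max |w 0| |w 1| := le_trans (abs_nonneg _) (le_max_left _ _)
    have hb := hgw'.1
    have hnorm : ‖w‖ ≤ 2 * w 2 := by
      apply norm_le_of
      · have : |w 0| ≤ max |w 0| |w 1| := le_max_left _ _
        linarith
      · have : |w 1| ≤ max |w 0| |w 1| := le_max_right _ _
        linarith
      · linarith
    rw [mk3_zero, sub_zero]
    calc ‖w‖ ≤ 2 * w 2 := hnorm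
      _ = 2 * zk k := by rw [hzw]
      _ ≤ 2 * zk N := by linarith
      _ < ε := by linarith
end
end
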